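/- arXiv:2405.18656 — 4 statements merged into one kernel-verified Lean document; each statement's English description precedes it below -/
import Mathlib

section
/- Let p be a monic polynomial with integer coefficients satisfying |p(0)| = 1. If p has exactly one root α (counted as a complex number) of odd multiplicity, then α = 1 or α = -1. -/
open Polynomial

private lemma rm_pow {R : Type*} [CommRing R] [IsDomain R] (q : R[X]) (hq : q ≠ 0) (a : R) :
    ∀ k : ℕ, rootMultiplicity a (q ^ k) = k * rootMultiplicity a q := by
  intro k
  induction k with
  | zero => simp [rootMultiplicity_eq_zero (p := (1 : R[X])) (by simp [IsRoot])]
  | succ n ih =>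
      rw [pow_succ, rootMultiplicity_mul (mul_ne_zero (pow_ne_zero _ hq) hq), ih]
      ring

/-- Let `p` be a monic polynomial with integer coefficients satisfying `|p(0)| = 1`.
If `p` has exactly one complex root `α` of odd multiplicity, then `α = 1` or `α = -1`. -/
theorem stmt0 (p : Polynomial ℤ) (hmonic : p.Monic) (h0 : |p.coeff 0| = 1) (α : ℂ)
    (hα : ∀ z : ℂ, Odd ((p.map (Int.castRingHom ℂ)).rootMultiplicity z) ↔ z = α) :
    α = 1 ∨ α = -1 := by
  set P := p.map (Int.castRingHom ℂ) with hPdef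
  have hPmonic : P.Monic := hmonic.map _
  have hPne : P ≠ 0 := hPmonic.ne_zero
  have hodd : Odd (P.rootMultiplicity α) := (hα α).mpr rfl
  have hrootα : P.IsRoot α := (rootMultiplicity_pos hPne).mp hodd.pos
  -- q over ℚ
  set q := p.map (Int.castRingHom ℚ) with hqdef
  have hqmonic : q.Monic := hmonic.map _
  have hqne : q ≠ 0 := hqmonic.ne_zero
  have hPq : P = q.map (algebraMap ℚ ℂ) := by
    rw [hqdef, Polynomial.map_map]
    congr 1
  have haeval : ∀ β : ℂ, aeval β q = P.eval β := by
    intro β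
    rw [aeval_def, eval₂_eq_eval_map, ← hPq]
  have hintα : IsIntegral ℚ α :=
    ⟨q, hqmonic, by rw [← aeval_def, haeval]; exact hrootα⟩
  set m := minpoly ℚ α with hmdef
  have hmirr : Irreducible m := minpoly.irreducible hintα
  have hmmonic : m.Monic := minpoly.monic hintα
  have hmsep : m.Separable := hmirr.separable
  obtain ⟨k, r, hndvd, hqe⟩ := WfDvdMonoid.max_power_factor hqne hmirr
  have hmCne : m.map (algebraMap ℚ ℂ) ≠ 0 := (hmmonic.map _).ne_zero
  -- key: any root β of m has rootMultiplicity β P = k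
  have key : ∀ β : ℂ, aeval β m = 0 → P.rootMultiplicity β = k := by
    intro β hβ
    have hintβ : IsIntegral ℚ β := ⟨m, hmmonic, by rw [← aeval_def]; exact hβ⟩
    have hmβ : minpoly ℚ β = m :=
      (minpoly.eq_of_irreducible_of_monic hmirr hβ hmmonic).symm
    have hrβ : aeval β r ≠ 0 := by
      intro h
      exact hndvd (hmβ ▸ minpoly.dvd ℚ β h)
    have hmultm : rootMultiplicity β (m.map (algebraMap ℚ ℂ)) = 1 := by
      have hle := rootMultiplicity_le_one_of_separable (hmsep.map (f := algebraMap ℚ ℂ)) β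
      have hpos : 0 < rootMultiplicity β (m.map (algebraMap ℚ ℂ)) := by
        rw [rootMultiplicity_pos hmCne]
        rw [IsRoot, eval_map, ← aeval_def, hβ]
      omega
    have hmultr : rootMultiplicity β (r.map (algebraMap ℚ ℂ)) = 0 := by
      apply rootMultiplicity_eq_zero
      rw [IsRoot, eval_map, ← aeval_def]
      exact hrβ
    have hPfac : P = (m.map (algebraMap ℚ ℂ)) ^ k * r.map (algebraMap ℚ ℂ) := by
      rw [hPq, hqe, Polynomial.map_mul, Polynomial.map_pow]
    rw [hPfac, rootMultiplicity_mul (by rw [← hPfac]; exact hPne), rm_pow _ hmCne,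
      hmultm, hmultr]
    omega
  have haevalαm : aeval α m = 0 := minpoly.aeval ℚ α
  have hkodd : Odd k := key α haevalαm ▸ hodd
  -- every complex root of m equals α
  have hroots : ∀ β ∈ (m.map (algebraMap ℚ ℂ)).roots, β = α := by
    intro β hβ
    have hb : aeval β m = 0 := by
      have := isRoot_of_mem_roots hβ
      rwa [IsRoot, eval_map, ← aeval_def] at this
    exact (hα β).mp (key β hb ▸ hkodd)
  -- m has degree 1
  have hdeg : m.natDegree = 1 := by
    have hcard : ((m.map (algebraMap ℚ ℂ)).roots).card = m.natDegree :=
      IsAlgClosed.card_roots_map_eq_natDegree_of_injective m (algebraMap ℚ ℂ).injective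
    have hcount : (m.map (algebraMap ℚ ℂ)).roots.count α = m.natDegree := by
      rw [← hcard]
      exact Multiset.count_eq_card.mpr (fun b hb => (hroots b hb).symm)
    have hle : rootMultiplicity α (m.map (algebraMap ℚ ℂ)) ≤ 1 :=
      rootMultiplicity_le_one_of_separable (hmsep.map (f := algebraMap ℚ ℂ)) α
    rw [count_roots] at hcount
    have hpos : 0 < m.natDegree := minpoly.natDegree_pos hintα
    omega
  -- α is rational
  set c : ℚ := -(m.coeff 0) with hc
  have hαrat : α = (c : ℂ) := by
    have hm1 : m = X + C (m.coeff 0) := hmmonic.eq_X_add_C hdeg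
    have h2 := haevalαm
    rw [hm1] at h2
    simp at h2
    rw [hc]
    push_cast
    linear_combination h2
  -- α integral over ℤ, hence c ∈ ℤ
  have hintZα : IsIntegral ℤ α := ⟨p, hmonic, by
    rw [← aeval_def, aeval_def, eval₂_eq_eval_map]; exact hrootα⟩
  have hintZc : IsIntegral ℤ c := by
    rw [← isIntegral_algebraMap_iff (algebraMap ℚ ℂ).injective]
    rw [show (algebraMap ℚ ℂ) c = α from (eq_ratCast (algebraMap ℚ ℂ) c).trans hαrat.symm]
    exact hintZα
  obtain ⟨n, hn⟩ := IsIntegrallyClosed.isIntegral_iff.mp hintZc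
  have hn' : (n : ℚ) = c := by rw [← hn]; simp
  have hαn : α = ((n : ℤ) : ℂ) := by rw [hαrat, ← hn']; push_cast; ring
  -- n is a root of p over ℤ
  have hrootn : p.IsRoot n := by
    have h1 : P.eval ((n : ℤ) : ℂ) = 0 := by rw [← hαn]; exact hrootα
    have h2 : ((p.eval n : ℤ) : ℂ) = 0 := by
      rwa [hPdef, eval_map, show ((n : ℤ) : ℂ) = (Int.castRingHom ℂ) n from rfl,
        eval₂_at_apply] at h1
    exact_mod_cast h2
  obtain ⟨h, hh⟩ := (dvd_iff_isRoot).mpr hrootn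
  have hdvd0 : n ∣ p.coeff 0 := by
    have hco := congrArg (fun s => Polynomial.coeff s 0) hh
    simp [coeff_mul, Finset.Nat.antidiagonal_zero] at hco
    exact ⟨-(h.coeff 0), by linarith [hco]⟩
  have hunit : n = 1 ∨ n = -1 := by
    have hd1 : n ∣ 1 := h0 ▸ (dvd_abs n _).mpr hdvd0
    exact Int.isUnit_iff.mp (isUnit_of_dvd_one hd1)
  rcases hunit with h | h <;> [left; right] <;> rw [hαn, h] <;> norm_num
end

section
/- Let p be a monic polynomial with integer coefficients satisfying |p(0)| = 1. If α and its conjugate ᾱ ≠ α are the only roots of p with odd multiplicity, then |α| = 1. -/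
open Polynomial

/-- Let `p` be a monic integer polynomial with `|p(0)| = 1`. If `α` and its conjugate
`ᾱ ≠ α` are the only complex roots of `p` with odd multiplicity, then `|α| = 1`. -/
theorem stmt1 (p : Polynomial ℤ) (hmonic : p.Monic) (h0 : |p.coeff 0| = 1) (α : ℂ)
    (hconj : starRingEnd ℂ α ≠ α)
    (hα : ∀ z : ℂ, Odd ((p.map (Int.castRingHom ℂ)).rootMultiplicity z) ↔
      (z = α ∨ z = starRingEnd ℂ α)) :
    ‖α‖ = 1 := by
  classical
  set pC := p.map (Int.castRingHom ℂ) with hpCdef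
  have hp0 : p ≠ 0 := hmonic.ne_zero
  have hpC0 : pC ≠ 0 := (hmonic.map (Int.castRingHom ℂ)).ne_zero
  have hαodd : Odd (pC.rootMultiplicity α) := (hα α).2 (Or.inl rfl)
  have hαroot : pC.IsRoot α :=
    (Polynomial.rootMultiplicity_pos hpC0).1 hαodd.pos
  have haev : Polynomial.aeval α p = 0 := by
    rwa [Polynomial.aeval_def, ← Polynomial.eval_map, algebraMap_int_eq]
  have hint : IsIntegral ℤ α := ⟨p, hmonic, by
    rwa [← Polynomial.aeval_def]⟩
  have hintQ : IsIntegral ℚ α := hint.tower_top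
  set μ := minpoly ℚ α with hμdef
  have hμirr : Irreducible μ := minpoly.irreducible hintQ
  have hμmonic : μ.Monic := minpoly.monic hintQ
  have hμsep : μ.Separable := hμirr.separable
  set μC := μ.map (algebraMap ℚ ℂ) with hμCdef
  have hμCmonic : μC.Monic := hμmonic.map _
  have hμC0 : μC ≠ 0 := hμCmonic.ne_zero
  have hμCsep : μC.Separable := hμsep.map
  set pQ := p.map (Int.castRingHom ℚ) with hpQdef
  have hpQ0 : pQ ≠ 0 := (hmonic.map (Int.castRingHom ℚ)).ne_zero
  have hfin : FiniteMultiplicity μ pQ :=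
    Polynomial.finiteMultiplicity_of_degree_pos_of_monic
      (minpoly.degree_pos hintQ) hμmonic hpQ0
  obtain ⟨r, hpr, hnd⟩ := hfin.exists_eq_pow_mul_and_not_dvd
  set k := multiplicity μ pQ with hkdef
  have hpCfact : pC = μC ^ k * r.map (algebraMap ℚ ℂ) := by
    have : Int.castRingHom ℂ = (algebraMap ℚ ℂ).comp (Int.castRingHom ℚ) := by
      ext n
      simp
    rw [hpCdef, this, ← Polynomial.map_map, ← hpQdef, hpr]
    simp [Polynomial.map_mul, Polynomial.map_pow, hμCdef]
  -- every root of μC has root multiplicity k in pC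
  have key : ∀ β : ℂ, μC.IsRoot β → pC.rootMultiplicity β = k := by
    intro β hβ
    have haevβ : Polynomial.aeval β μ = 0 := by
      rwa [Polynomial.aeval_def, ← Polynomial.eval_map]
    have hμβ : μ = minpoly ℚ β :=
      (minpoly.eq_of_irreducible_of_monic hμirr haevβ hμmonic)
    have hrβ : ¬ (r.map (algebraMap ℚ ℂ)).IsRoot β := by
      intro h
      have : Polynomial.aeval β r = 0 := by
        rwa [Polynomial.aeval_def, ← Polynomial.eval_map]
      exact hnd (hμβ ▸ minpoly.dvd ℚ β this)
    have hprod0 : μC ^ k * r.map (algebraMap ℚ ℂ) ≠ 0 := hpCfact ▸ hpC0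
    have hmul1 : μC.rootMultiplicity β = 1 := by
      have h1 : 0 < μC.rootMultiplicity β := (Polynomial.rootMultiplicity_pos hμC0).2 hβ
      have h2 : μC.rootMultiplicity β ≤ 1 :=
        Polynomial.rootMultiplicity_le_one_of_separable hμCsep β
      omega
    rw [hpCfact, Polynomial.rootMultiplicity_mul hprod0]
    have hpow : (μC ^ k).rootMultiplicity β = k := by
      rw [← Polynomial.count_roots, Polynomial.roots_pow, Multiset.count_nsmul,
        Polynomial.count_roots, hmul1, mul_one]
    rw [hpow, Polynomial.rootMultiplicity_eq_zero hrβ, add_zero]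
  have hαμ : μC.IsRoot α := by
    rw [Polynomial.IsRoot, Polynomial.eval_map, ← Polynomial.aeval_def, minpoly.aeval]
  have hkodd : Odd k := by
    have := key α hαμ
    rwa [this] at hαodd
  -- roots of μC are exactly {α, conj α}
  have hconjroot : μC.IsRoot (starRingEnd ℂ α) := by
    have h := Polynomial.aeval_algHom_apply (starRingEnd ℂ).toRatAlgHom α μ
    rw [minpoly.aeval, map_zero] at h
    rw [Polynomial.IsRoot, Polynomial.eval_map, ← Polynomial.aeval_def]
    have e : ((starRingEnd ℂ).toRatAlgHom α) = starRingEnd ℂ α := rfl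
    rw [← e]
    exact h
  have hrootmem : ∀ β : ℂ, μC.IsRoot β → β = α ∨ β = starRingEnd ℂ α := by
    intro β hβ
    have := key β hβ
    exact (hα β).1 (this ▸ hkodd)
  have hroots : μC.roots = {α, starRingEnd ℂ α} := by
    have hle1 : ∀ x : ℂ, μC.roots.count x ≤ 1 := fun x => by
      rw [Polynomial.count_roots]
      exact Polynomial.rootMultiplicity_le_one_of_separable hμCsep x
    ext x
    rcases eq_or_ne x α with h | hxα
    · have h1 : α ∈ μC.roots := (Polynomial.mem_roots hμC0).2 hαμ
      have h2 : 1 ≤ μC.roots.count α := Multiset.one_le_count_iff_mem.2 h1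
      have h3 : μC.roots.count α = 1 := le_antisymm (hle1 α) h2
      rw [h, h3]
      simp [Multiset.count_cons, Multiset.count_singleton, Ne.symm hconj]
    · rcases eq_or_ne x (starRingEnd ℂ α) with h | hxc
      · have h1 : starRingEnd ℂ α ∈ μC.roots := (Polynomial.mem_roots hμC0).2 hconjroot
        have h2 : 1 ≤ μC.roots.count (starRingEnd ℂ α) := Multiset.one_le_count_iff_mem.2 h1
        have h3 : μC.roots.count (starRingEnd ℂ α) = 1 := le_antisymm (hle1 _) h2
        rw [h, h3]
        simp [Multiset.count_cons, Multiset.count_singleton, hconj]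
      · have h1 : x ∉ μC.roots := by
          intro hmem
          rcases hrootmem x ((Polynomial.mem_roots hμC0).1 hmem) with h | h
          exacts [hxα h, hxc h]
        rw [Multiset.count_eq_zero.2 h1]
        simp [Multiset.count_cons, Multiset.count_singleton, hxα, hxc]
  have hsplit : μC = (X - C α) * (X - C (starRingEnd ℂ α)) := by
    have hs : Splits μC :=
      IsAlgClosed.splits μC
    have := hs.eq_prod_roots_of_monic hμCmonic
    rw [hroots] at this
    simpa [Multiset.map_cons, Multiset.prod_cons] using this
  -- constant coefficient computation
  set q := minpoly ℤ α with hqdef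
  have hμq : μ = q.map (Int.castRingHom ℚ) := by
    have := minpoly.isIntegrallyClosed_eq_field_fractions' ℚ hint
    rwa [algebraMap_int_eq] at this
  have heval0 : μC.eval 0 = ((q.coeff 0 : ℤ) : ℂ) := by
    rw [hμCdef, Polynomial.eval_map, Polynomial.eval₂_at_zero, hμq]
    simp
  have heval0' : μC.eval 0 = α * starRingEnd ℂ α := by
    rw [hsplit]
    simp only [Polynomial.eval_mul, Polynomial.eval_sub, Polynomial.eval_X, Polynomial.eval_C,
      zero_sub, neg_mul_neg]
  have hnormsq : ((q.coeff 0 : ℤ) : ℂ) = (Complex.normSq α : ℂ) := by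
    rw [← heval0, heval0', Complex.mul_conj]
  -- q.coeff 0 divides p.coeff 0 = ±1
  have hdvd : q ∣ p := minpoly.isIntegrallyClosed_dvd hint haev
  obtain ⟨c, hc⟩ := hdvd
  have hdvd0 : q.coeff 0 ∣ p.coeff 0 := ⟨c.coeff 0, by rw [hc, Polynomial.mul_coeff_zero]⟩
  have hunit : IsUnit (q.coeff 0) := by
    have : IsUnit (p.coeff 0) := by
      rcases abs_eq (by norm_num : (0:ℤ) ≤ 1) |>.1 h0 with h | h <;> simp [h]
    exact isUnit_of_dvd_unit hdvd0 this
  have hq01 : q.coeff 0 = 1 ∨ q.coeff 0 = -1 := Int.isUnit_iff.1 hunit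
  have hns : (Complex.normSq α : ℝ) = (q.coeff 0 : ℝ) := by
    have := hnormsq
    exact_mod_cast (by exact_mod_cast this.symm : ((Complex.normSq α : ℝ) : ℂ) = ((q.coeff 0 : ℝ) : ℂ))
  have hns1 : Complex.normSq α = 1 := by
    rcases hq01 with h | h
    · rw [h] at hns; exact_mod_cast hns
    · exfalso
      rw [h] at hns
      have : (0:ℝ) ≤ Complex.normSq α := Complex.normSq_nonneg α
      simp at hns
      linarith
  have habs : ‖α‖ ^ 2 = 1 := by
    rw [Complex.sq_norm, hns1]
  nlinarith [norm_nonneg α, habs]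
end

section
/- Let p(x) = xⁿ + Σ_{j=1}^{n-1} (-1)^j m_{n-j} x^{n-j} + (-1)ⁿ be a monic integer polynomial of degree n ≥ 2 with all m_j > 0, and set m_0 = m_n = 1. If m_j² - 4 m_{j-1} m_{j+1} > 0 for all j = 1, …, n-1, then p has n distinct positive real roots. -/
open Polynomial Finset


private lemma neg_one_pow_two_mul_add (k a : ℕ) : (-1:ℝ)^(2*k+a) = (-1:ℝ)^a := by
  rw [pow_add, pow_mul, neg_one_sq, one_pow, one_mul]

private lemma lowA (t : ℕ → ℝ) : ∀ k : ℕ, (∀ i, i < k → 0 ≤ t i) → (∀ i, i + 1 < k → t i ≤ t (i+1)) →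
    (∑ j ∈ Finset.range k, (-1:ℝ)^(j+k) * t j ≤ 0) ∧
    (∀ l, k = l + 1 → -(t l) ≤ ∑ j ∈ Finset.range k, (-1:ℝ)^(j+k) * t j) := by
  intro k
  induction k with
  | zero => simp
  | succ k ih =>
    intro h0 h1
    have hs : ∑ j ∈ Finset.range (k+1), (-1:ℝ)^(j+(k+1)) * t j
        = -(∑ j ∈ Finset.range k, (-1:ℝ)^(j+k) * t j) - t k := by
      rw [Finset.sum_range_succ]
      have hk : ((-1:ℝ))^(k+(k+1)) = -1 := by
        rw [show k+(k+1) = 2*k+1 by ring, neg_one_pow_two_mul_add, pow_one]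
      have hterm : ∀ j, ((-1:ℝ))^(j+(k+1)) * t j = -(((-1:ℝ))^(j+k) * t j) := by
        intro j
        rw [show j + (k+1) = (j+k)+1 by ring, pow_succ]
        ring
      rw [hk, Finset.sum_congr rfl (fun j _ => hterm j), Finset.sum_neg_distrib]
      ring
    obtain ⟨ihle, ihlb⟩ := ih (fun i hi => h0 i (by omega)) (fun i hi => h1 i (by omega))
    constructor
    · rw [hs]
      rcases Nat.eq_zero_or_pos k with hk0 | hk0
      · subst hk0
        have := h0 0 (by omega)
        simp
        linarith
      · obtain ⟨l, hl⟩ : ∃ l, k = l + 1 := ⟨k - 1, by omega⟩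
        have hb := ihlb l hl
        have hm := h1 l (by omega)
        rw [← hl] at hm
        linarith
    · intro l hl
      have : l = k := by omega
      subst this
      rw [hs]
      linarith

private lemma altU : ∀ (r : ℕ) (c : ℕ → ℝ), (∀ i, i < r → 0 ≤ c i) → (∀ i, i + 1 < r → c (i+1) ≤ c i) →
    0 ≤ ∑ i ∈ Finset.range r, (-1:ℝ)^i * c i ∧
    (∀ l, r = l + 1 → ∑ i ∈ Finset.range r, (-1:ℝ)^i * c i ≤ c 0) := by
  intro r
  induction r with
  | zero => intro c _ _; simp
  | succ r ih =>
    intro c h0 h1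
    have hs : ∑ i ∈ Finset.range (r+1), (-1:ℝ)^i * c i
        = c 0 - ∑ i ∈ Finset.range r, (-1:ℝ)^i * c (i+1) := by
      rw [Finset.sum_range_succ']
      have hterm : ∀ i, ((-1:ℝ))^(i+1) * c (i+1) = -(((-1:ℝ))^i * c (i+1)) := by
        intro i; rw [pow_succ]; ring
      rw [Finset.sum_congr rfl (fun i _ => hterm i), Finset.sum_neg_distrib]
      simp
      ring
    obtain ⟨ihle, ihlb⟩ := ih (fun i => c (i+1)) (fun i hi => h0 (i+1) (by omega)) (fun i hi => h1 (i+1) (by omega))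
    constructor
    · rw [hs]
      rcases Nat.eq_zero_or_pos r with hr0 | hr0
      · subst hr0; simp; exact h0 0 (by omega)
      · have := ihlb (r-1) (by omega)
        have := h1 0 (by omega)
        linarith
    · intro l hl
      rw [hs]
      linarith


private lemma qfacts (n : ℕ) (μ : ℕ → ℝ) (hμ : ∀ j, j ≤ n → 0 < μ j)
    (hq : ∀ j, 1 ≤ j → j + 1 ≤ n → 4 * (μ (j-1) * μ (j+1)) < (μ j)^2) :
    (∀ j, 1 ≤ j → j + 1 ≤ n → 4 * (μ (j-1) / μ j) < μ j / μ (j+1)) ∧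
    (∀ a b, 1 ≤ a → a ≤ b → b ≤ n → μ (a-1) / μ a ≤ μ (b-1) / μ b) := by
  have hq' : ∀ j, 1 ≤ j → j + 1 ≤ n → 4 * (μ (j-1) / μ j) < μ j / μ (j+1) := by
    intro j h1 h2
    have hj : 0 < μ j := hμ j (by omega)
    have hj1 : 0 < μ (j+1) := hμ (j+1) (by omega)
    have he : 4 * (μ (j-1) / μ j) = (4 * μ (j-1)) / μ j := by ring
    rw [he, div_lt_div_iff₀ hj hj1]
    nlinarith [hq j h1 h2]
  refine ⟨hq', ?_⟩
  intro a b ha hab hbn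
  induction b with
  | zero => omega
  | succ b ih =>
    rcases Nat.lt_or_ge a (b+1) with h | h
    · have hab' : a ≤ b := by omega
      have h1b : 1 ≤ b := by omega
      have hbn' : b ≤ n := by omega
      have step : μ (b-1) / μ b ≤ μ b / μ (b+1) := by
        have h4 := hq' b h1b (by omega)
        have : 0 < μ (b-1) / μ b := div_pos (hμ _ (by omega)) (hμ _ (by omega))
        linarith
      have hih := ih hab' hbn'
      have hb1 : (b+1)-1 = b := by omega
      rw [hb1]
      linarith
    · have : a = b + 1 := by omega
      subst this
      exact le_rfl


private lemma kurtz_sign (n : ℕ) (μ : ℕ → ℝ) (hμ : ∀ j, j ≤ n → 0 < μ j)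
    (hq : ∀ j, 1 ≤ j → j + 1 ≤ n → 4 * (μ (j-1) * μ (j+1)) < (μ j)^2)
    (k : ℕ) (hk : 1 ≤ k) (hkn : k ≤ n) :
    0 < ∑ j ∈ Finset.range (n+1), (-1:ℝ)^(j+k) * (μ j * (2 * μ (k-1) / μ k)^j) := by
  obtain ⟨hq4, hqm⟩ := qfacts n μ hμ hq
  set s : ℝ := 2 * μ (k-1) / μ k with hs_def
  have hμk : 0 < μ k := hμ k hkn
  have hμk1 : 0 < μ (k-1) := hμ (k-1) (by omega)
  have hspos : 0 < s := by positivity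
  set t : ℕ → ℝ := fun j => μ j * s ^ j with ht_def
  have htpos : ∀ j, j ≤ n → 0 < t j := fun j hj => by
    have := hμ j hj
    simp only [ht_def]
    positivity
  have hqk_s : μ (k-1) / μ k = s / 2 := by rw [hs_def]; ring
  -- f1
  have f1 : 2 * t (k-1) = t k := by
    have hμks : μ k * s = 2 * μ (k-1) := by
      rw [hs_def]; field_simp
    have hkk : k = (k-1) + 1 := by omega
    calc 2 * t (k-1) = 2 * μ (k-1) * s ^ (k-1) := by simp only [ht_def]; ring
    _ = (μ k * s) * s ^ (k-1) := by rw [hμks]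
    _ = μ k * s ^ ((k-1)+1) := by rw [pow_succ]; ring
    _ = t k := by rw [← hkk]
  -- f2
  have f2 : ∀ i, i + 1 < k → t i ≤ t (i+1) := by
    intro i hi
    have hμi1 : 0 < μ (i+1) := hμ (i+1) (by omega)
    have hqle : μ i / μ (i+1) ≤ μ (k-1) / μ k := by
      have := hqm (i+1) k (by omega) (by omega) hkn
      simpa using this
    have hle : μ i / μ (i+1) ≤ s := by rw [hqk_s] at hqle; linarith
    have hmi : μ i ≤ s * μ (i+1) := by
      rw [div_le_iff₀ hμi1] at hle; linarith
    have hsp : (0:ℝ) ≤ s ^ i := by positivity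
    calc t i = μ i * s ^ i := rfl
    _ ≤ (s * μ (i+1)) * s ^ i := by nlinarith
    _ = μ (i+1) * s ^ (i+1) := by rw [pow_succ]; ring
  -- f3
  have f3 : k + 1 ≤ n → 2 * t (k+1) < t k := by
    intro hk1n
    have hμk1' : 0 < μ (k+1) := hμ (k+1) hk1n
    have h4 := hq4 k hk hk1n
    have h2s : 2 * s < μ k / μ (k+1) := by rw [hqk_s] at h4; linarith
    have : (2 * s) * μ (k+1) < μ k := by
      rw [lt_div_iff₀ hμk1'] at h2s; linarith
    have hsp : (0:ℝ) < s ^ k := by positivity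
    calc 2 * t (k+1) = ((2 * s) * μ (k+1)) * s ^ k := by
          simp only [ht_def]; rw [pow_succ]; ring
    _ < μ k * s ^ k := by nlinarith
    _ = t k := rfl
  -- f4
  have f4 : ∀ j, k + 1 ≤ j → j + 1 ≤ n → t (j+1) ≤ t j := by
    intro j hkj hjn
    have hμj : 0 < μ j := hμ j (by omega)
    have hμj1 : 0 < μ (j+1) := hμ (j+1) hjn
    have hqge : μ k / μ (k+1) ≤ μ j / μ (j+1) := by
      have := hqm (k+1) (j+1) (by omega) (by omega) hjn
      simpa using this
    have h4 := hq4 k hk (by omega)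
    have hs_lt : s ≤ μ j / μ (j+1) := by
      rw [hqk_s] at h4
      linarith
    have : μ (j+1) * s ≤ μ j := by
      rw [le_div_iff₀ hμj1] at hs_lt; linarith
    have hsp : (0:ℝ) ≤ s ^ j := by positivity
    calc t (j+1) = (μ (j+1) * s) * s ^ j := by simp only [ht_def]; rw [pow_succ]; ring
    _ ≤ μ j * s ^ j := by nlinarith
    _ = t j := rfl
  -- rewrite sum
  have hsum : ∑ j ∈ Finset.range (n+1), (-1:ℝ)^(j+k) * (μ j * s^j)
      = (∑ j ∈ Finset.range k, (-1:ℝ)^(j+k) * t j) + t k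
        + (-(∑ i ∈ Finset.range (n-k), (-1:ℝ)^i * t (k+1+i))) := by
    have hsplit : ∑ j ∈ Finset.range (n+1), (-1:ℝ)^(j+k) * (μ j * s^j)
        = (∑ j ∈ Finset.range k, (-1:ℝ)^(j+k) * (μ j * s^j))
          + ∑ j ∈ Finset.Ico k (n+1), (-1:ℝ)^(j+k) * (μ j * s^j) := by
      rw [Finset.range_eq_Ico,
        ← Finset.sum_Ico_consecutive _ (Nat.zero_le k) (by omega : k ≤ n+1),
        ← Finset.range_eq_Ico]
    have hIco : ∑ j ∈ Finset.Ico k (n+1), (-1:ℝ)^(j+k) * (μ j * s^j)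
        = (-1:ℝ)^((k+0)+k) * (μ (k+0) * s^(k+0))
          + ∑ i ∈ Finset.range (n-k), (-1:ℝ)^((k+(i+1))+k) * (μ (k+(i+1)) * s^(k+(i+1))) := by
      rw [Finset.sum_Ico_eq_sum_range, show n+1-k = (n-k)+1 by omega,
        Finset.sum_range_succ']
      ring
    rw [hsplit, hIco]
    have hmid : (-1:ℝ)^((k+0)+k) * (μ (k+0) * s^(k+0)) = t k := by
      simp only [Nat.add_zero]
      rw [show k+k = 2*k+0 by ring, neg_one_pow_two_mul_add, pow_zero, one_mul]
    have hup : ∀ i, (-1:ℝ)^((k+(i+1))+k) * (μ (k+(i+1)) * s^(k+(i+1)))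
        = -((-1:ℝ)^i * t (k+1+i)) := by
      intro i
      rw [show (k+(i+1))+k = 2*k+(i+1) by ring, neg_one_pow_two_mul_add, pow_succ]
      rw [show k+(i+1) = k+1+i by ring]
      simp only [ht_def]
      ring
    rw [Finset.sum_congr rfl (fun i _ => hup i), Finset.sum_neg_distrib, hmid]
    ring
  rw [hsum]
  -- lower bound
  obtain ⟨hLle, hLlb⟩ := lowA t k (fun i hi => le_of_lt (htpos i (by omega))) f2
  have hL : -(t (k-1)) ≤ ∑ j ∈ Finset.range k, (-1:ℝ)^(j+k) * t j :=
    hLlb (k-1) (by omega)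
  -- upper bound
  obtain ⟨hUle, hUlb⟩ := altU (n-k) (fun i => t (k+1+i))
    (fun i hi => le_of_lt (htpos (k+1+i) (by omega)))
    (fun i hi => by
      have := f4 (k+1+i) (by omega) (by omega)
      simpa [show k+1+(i+1) = k+1+i+1 by ring] using this)
  have htk : 0 < t k := htpos k hkn
  rcases Nat.lt_or_ge k n with hlt | hge
  · have hU : (∑ i ∈ Finset.range (n-k), (-1:ℝ)^i * t (k+1+i)) ≤ t (k+1) := by
      have := hUlb (n-k-1) (by omega)
      simpa using this
    have h3 := f3 (by omega)
    linarith
  · have hkn' : k = n := by omega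
    have : n - k = 0 := by omega
    rw [this] at hUle hUlb ⊢
    simp only [Finset.range_zero, Finset.sum_empty, neg_zero, add_zero]
    linarith


private lemma heval_ax (n : ℕ) (hn : 2 ≤ n) (m : ℕ → ℤ) (h0 : m 0 = 1) (hnn : m n = 1)
    (p : Polynomial ℤ)
    (hp : p = X ^ n + (∑ j ∈ Finset.Icc 1 (n - 1), C ((-1) ^ j * m (n - j)) * X ^ (n - j))
      + C ((-1) ^ n)) :
    ∀ x : ℝ, (p.map (Int.castRingHom ℝ)).eval x
      = ∑ j ∈ Finset.range (n+1), (-1:ℝ)^(n+j) * (((m j : ℝ)) * x^j) := by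
  intro x
  have hLHS : (p.map (Int.castRingHom ℝ)).eval x
      = x^n + (∑ j ∈ Finset.Icc 1 (n - 1), (-1:ℝ)^j * ((m (n-j) : ℝ)) * x^(n-j)) + (-1:ℝ)^n := by
    rw [hp]
    simp [Polynomial.eval_map, Polynomial.eval₂_add, Polynomial.eval₂_finset_sum]
    apply Finset.sum_congr rfl
    intro j hj
    rw [show ((-1 : ℤ[X])^j) = C ((-1)^j) by simp, Polynomial.eval₂_C,
      show ((m (n-j) : ℤ[X])) = C (m (n-j)) by simp, Polynomial.eval₂_C]
    simp only [map_pow, map_neg, map_one, Int.coe_castRingHom]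
  rw [hLHS]
  -- decompose RHS
  have hset : Finset.range (n+1) = insert 0 (insert n (Finset.Icc 1 (n-1))) := by
    ext a
    simp only [Finset.mem_range, Finset.mem_insert, Finset.mem_Icc]
    omega
  rw [hset, Finset.sum_insert (by simp [Finset.mem_Icc]; omega),
    Finset.sum_insert (by simp [Finset.mem_Icc]; omega)]
  -- reindex the Icc sum
  have hbij : ∑ j ∈ Finset.Icc 1 (n-1), (-1:ℝ)^(n+j) * (((m j : ℝ)) * x^j)
      = ∑ j ∈ Finset.Icc 1 (n-1), (-1:ℝ)^(n+(n-j)) * (((m (n-j) : ℝ)) * x^(n-j)) := by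
    apply Finset.sum_nbij' (fun j => n - j) (fun j => n - j)
    · intro a ha; simp only [Finset.mem_Icc] at *; omega
    · intro a ha; simp only [Finset.mem_Icc] at *; omega
    · intro a ha; simp only [Finset.mem_Icc] at *; omega
    · intro a ha; simp only [Finset.mem_Icc] at *; omega
    · intro a ha
      simp only [Finset.mem_Icc] at ha
      rw [show n - (n - a) = a by omega]
  rw [hbij]
  have hterm : ∀ j ∈ Finset.Icc 1 (n-1),
      (-1:ℝ)^(n+(n-j)) * (((m (n-j) : ℝ)) * x^(n-j)) = (-1:ℝ)^j * ((m (n-j) : ℝ)) * x^(n-j) := by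
    intro j hj
    simp only [Finset.mem_Icc] at hj
    rw [show n+(n-j) = 2*(n-j)+j by omega, neg_one_pow_two_mul_add]
    ring
  rw [Finset.sum_congr rfl hterm]
  have h00 : (-1:ℝ)^(n+0) * (((m 0 : ℝ)) * x^0) = (-1:ℝ)^n := by
    rw [h0]; push_cast; ring
  have hnn' : (-1:ℝ)^(n+n) * (((m n : ℝ)) * x^n) = x^n := by
    rw [hnn, show n+n = 2*n+0 by ring, neg_one_pow_two_mul_add]
    push_cast; ring
  rw [h00, hnn']
  ring


/-- Kurtz-type criterion: let `p(x) = xⁿ + Σ_{j=1}^{n-1} (-1)^j m_{n-j} x^{n-j} + (-1)ⁿ`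
be a monic integer polynomial of degree `n ≥ 2` with all `m_j > 0`, and set `m_0 = m_n = 1`.
If `m_j² - 4 m_{j-1} m_{j+1} > 0` for all `j = 1,…,n-1`, then `p` has `n` distinct positive
real roots. -/
theorem stmt7 (n : ℕ) (hn : 2 ≤ n) (m : ℕ → ℤ) (h0 : m 0 = 1) (hnn : m n = 1)
    (hpos : ∀ j, 1 ≤ j → j ≤ n - 1 → 0 < m j)
    (hkurtz : ∀ j, 1 ≤ j → j ≤ n - 1 → 0 < (m j) ^ 2 - 4 * m (j - 1) * m (j + 1))
    (p : Polynomial ℤ)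
    (hp : p = X ^ n + (∑ j ∈ Finset.Icc 1 (n - 1), C ((-1) ^ j * m (n - j)) * X ^ (n - j))
      + C ((-1) ^ n)) :
    ∃ r : Fin n → ℝ, Function.Injective r ∧ (∀ i, 0 < r i) ∧
      p.map (Int.castRingHom ℝ) = ∏ i, (X - C (r i)) := by
  set μ : ℕ → ℝ := fun j => ((m j : ℝ)) with hμ_def
  have hμpos : ∀ j, j ≤ n → 0 < μ j := by
    intro j hj
    simp only [hμ_def]
    rcases Nat.eq_zero_or_pos j with h | h
    · subst h; rw [h0]; norm_num
    · rcases Nat.lt_or_ge j n with h2 | h2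
      · have := hpos j (by omega) (by omega)
        exact_mod_cast this
      · have : j = n := by omega
        subst this; rw [hnn]; norm_num
  have hq : ∀ j, 1 ≤ j → j + 1 ≤ n → 4 * (μ (j-1) * μ (j+1)) < (μ j)^2 := by
    intro j h1 h2
    have := hkurtz j h1 (by omega)
    have h' : (0:ℝ) < (m j : ℝ)^2 - 4*((m (j-1) : ℝ))*((m (j+1) : ℝ)) := by exact_mod_cast this
    simp only [hμ_def]
    nlinarith [h']
  obtain ⟨hq4, hqm⟩ := qfacts n μ hμpos hq
  set P : Polynomial ℝ := p.map (Int.castRingHom ℝ) with hP_def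
  have heval := heval_ax n hn m h0 hnn p hp
  -- test points
  set g : ℕ → ℝ := fun k => if k = 0 then 0 else 2 * μ (k-1) / μ k with hg_def
  have hgpos : ∀ k, 1 ≤ k → k ≤ n → 0 < g k := by
    intro k h1 h2
    simp only [hg_def, if_neg (by omega : ¬ k = 0)]
    have := hμpos k h2
    have := hμpos (k-1) (by omega)
    positivity
  have hgmono : ∀ a b, a < b → b ≤ n → g a < g b := by
    intro a b hab hbn
    rcases Nat.eq_zero_or_pos a with h | h
    · subst h
      simpa [hg_def] using hgpos b (by omega) hbn
    · simp only [hg_def, if_neg (by omega : ¬ a = 0), if_neg (by omega : ¬ b = 0)]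
      have hstep : μ (a-1) / μ a < μ (b-1) / μ b := by
        have h1 : μ (a-1) / μ a ≤ μ (b-1-1) / μ (b-1) := by
          have := hqm a (b-1) h (by omega) (by omega)
          exact this
        have h2 : 4 * (μ (b-1-1) / μ (b-1)) < μ (b-1) / μ b := by
          have := hq4 (b-1) (by omega) (by omega)
          rw [show b-1+1 = b by omega] at this
          exact this
        have h3 : 0 < μ (a-1) / μ a := div_pos (hμpos _ (by omega)) (hμpos _ (by omega))
        calc μ (a-1) / μ a ≤ μ (b-1-1) / μ (b-1) := h1
        _ < μ (b-1) / μ b := by linarith [div_pos (hμpos (b-1-1) (by omega)) (hμpos (b-1) (by omega))]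
      have hb : 0 < μ b := hμpos b hbn
      have ha : 0 < μ a := hμpos a (by omega)
      rw [div_lt_div_iff₀ ha hb] at hstep ⊢
      linarith
  -- sign at test points
  have hsign : ∀ k, k ≤ n → 0 < (-1:ℝ)^(n+k) * P.eval (g k) := by
    intro k hkn
    rcases Nat.eq_zero_or_pos k with h | h
    · subst h
      have hg0 : g 0 = 0 := by simp [hg_def]
      rw [hg0, heval 0]
      rw [Finset.mul_sum]
      rw [Finset.sum_eq_single 0]
      · simp [hμ_def, h0]
      · intro b hb hbne
        simp [zero_pow hbne]
      · intro hb; simp at hb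
    · have hgk : g k = 2 * μ (k-1) / μ k := by simp [hg_def]; omega
      rw [hgk, heval _, Finset.mul_sum]
      have hterm : ∀ j, (-1:ℝ)^(n+k) * ((-1:ℝ)^(n+j) * (μ j * (2 * μ (k-1) / μ k)^j))
          = (-1:ℝ)^(j+k) * (μ j * (2 * μ (k-1) / μ k)^j) := by
        intro j
        rw [← mul_assoc, ← pow_add, show (n+k)+(n+j) = 2*n+(j+k) by ring, neg_one_pow_two_mul_add]
      rw [Finset.sum_congr rfl (fun j _ => hterm j)]
      exact kurtz_sign n μ hμpos hq k h hkn
  -- roots via IVT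
  have hcont : ContinuousOn (fun y => P.eval y) (Set.univ) := (Polynomial.continuous P).continuousOn
  have hroot : ∀ i : Fin n, ∃ x, x ∈ Set.Ioo (g i) (g (i+1)) ∧ P.eval x = 0 := by
    intro i
    have hi1 : (i:ℕ) + 1 ≤ n := i.2
    have hA := hsign i (by omega)
    have hB := hsign ((i:ℕ)+1) hi1
    have hglt : g i < g ((i:ℕ)+1) := hgmono i ((i:ℕ)+1) (by omega) hi1
    have hABneg : P.eval (g i) * P.eval (g ((i:ℕ)+1)) < 0 := by
      have hmul := mul_pos hA hB
      have : (-1:ℝ)^(n+(i:ℕ)) * P.eval (g i) * ((-1:ℝ)^(n+((i:ℕ)+1)) * P.eval (g ((i:ℕ)+1)))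
          = -(P.eval (g i) * P.eval (g ((i:ℕ)+1))) := by
        rw [show (-1:ℝ)^(n+(i:ℕ)) * P.eval (g i) * ((-1:ℝ)^(n+((i:ℕ)+1)) * P.eval (g ((i:ℕ)+1)))
          = ((-1:ℝ)^(n+(i:ℕ)) * (-1:ℝ)^(n+((i:ℕ)+1))) * (P.eval (g i) * P.eval (g ((i:ℕ)+1))) by ring]
        rw [← pow_add, show (n+(i:ℕ))+(n+((i:ℕ)+1)) = 2*(n+(i:ℕ))+1 by ring,
          neg_one_pow_two_mul_add, pow_one]
        ring
      rw [this] at hmul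
      linarith
    rcases lt_or_ge (P.eval (g i)) 0 with hA0 | hA0
    · have hB0 : 0 < P.eval (g ((i:ℕ)+1)) := by nlinarith
      have := intermediate_value_Ioo (le_of_lt hglt) (hcont.mono (Set.subset_univ _))
      have h0mem : (0:ℝ) ∈ Set.Ioo (P.eval (g i)) (P.eval (g ((i:ℕ)+1))) := ⟨hA0, hB0⟩
      obtain ⟨x, hx, hx0⟩ := this h0mem
      exact ⟨x, hx, hx0⟩
    · have hA0' : 0 < P.eval (g i) := by
        rcases lt_or_eq_of_le hA0 with h' | h'
        · exact h'
        · exfalso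
          rw [← h'] at hABneg
          norm_num at hABneg
      have hB0 : P.eval (g ((i:ℕ)+1)) < 0 := by nlinarith
      have := intermediate_value_Ioo' (le_of_lt hglt) (hcont.mono (Set.subset_univ _))
      have h0mem : (0:ℝ) ∈ Set.Ioo (P.eval (g ((i:ℕ)+1))) (P.eval (g i)) := ⟨hB0, hA0'⟩
      obtain ⟨x, hx, hx0⟩ := this h0mem
      exact ⟨x, hx, hx0⟩
  choose r hrmem hrroot using hroot
  -- r strictly monotone
  have hg0 : g 0 = 0 := by simp [hg_def]
  have hrpos : ∀ i, 0 < r i := by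
    intro i
    have h1 := (hrmem i).1
    rcases Nat.eq_zero_or_pos (i:ℕ) with h | h
    · have : g (i:ℕ) = 0 := by rw [h]; exact hg0
      rw [this] at h1; exact h1
    · have : 0 < g (i:ℕ) := hgpos _ h (by omega)
      linarith
  have hrmono : ∀ i j : Fin n, i < j → r i < r j := by
    intro i j hij
    have h1 : r i < g ((i:ℕ)+1) := (hrmem i).2
    have h2 : g (j:ℕ) < r j := (hrmem j).1
    have h3 : g ((i:ℕ)+1) ≤ g (j:ℕ) := by
      rcases Nat.lt_or_ge ((i:ℕ)+1) (j:ℕ) with h | h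
      · exact le_of_lt (hgmono _ _ h (by omega))
      · have : (i:ℕ)+1 = (j:ℕ) := by
          have := Fin.lt_def.mp hij; omega
        rw [this]
    linarith
  have hrinj : Function.Injective r := by
    intro a b hab
    by_contra hne
    rcases lt_or_gt_of_ne (fun h => hne h) with h | h
    · exact absurd hab (ne_of_lt (hrmono a b h))
    · exact absurd hab.symm (ne_of_lt (hrmono b a h))
  -- monic and degree
  have hlow : (∑ j ∈ Finset.Icc 1 (n - 1), C ((-1) ^ j * m (n - j)) * X ^ (n - j) : ℤ[X]).degree
      < (n : WithBot ℕ) := by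
    apply lt_of_le_of_lt (Polynomial.degree_sum_le _ _)
    rw [Finset.sup_lt_iff (by exact_mod_cast WithBot.bot_lt_coe n)]
    intro j hj
    simp only [Finset.mem_Icc] at hj
    apply lt_of_le_of_lt (Polynomial.degree_C_mul_X_pow_le _ _)
    exact_mod_cast Nat.lt_of_le_of_lt (by omega : n - j ≤ n - 1) (by omega)
  have hlow2 : ((∑ j ∈ Finset.Icc 1 (n - 1), C ((-1) ^ j * m (n - j)) * X ^ (n - j)) + C ((-1)^n) : ℤ[X]).degree < (n : WithBot ℕ) := by
    apply lt_of_le_of_lt (Polynomial.degree_add_le _ _)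
    rw [max_lt_iff]
    refine ⟨hlow, lt_of_le_of_lt (Polynomial.degree_C_le) ?_⟩
    exact_mod_cast WithBot.coe_lt_coe.mpr (by omega : 0 < n)
  -- monic & degree of p
  have hpm : p.Monic := by
    rw [hp, add_assoc]
    exact Polynomial.monic_X_pow_add hlow2
  have hpdeg : p.natDegree = n := by
    have hdx : (X ^ n : ℤ[X]).degree = (n : WithBot ℕ) := Polynomial.degree_X_pow n
    have : p.degree = (n : WithBot ℕ) := by
      rw [hp, add_assoc, Polynomial.degree_add_eq_left_of_degree_lt (by rw [hdx]; exact hlow2), hdx]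
    exact Polynomial.natDegree_eq_of_degree_eq_some this
  have hPm : P.Monic := hpm.map _
  have hPdeg : P.natDegree = n := by
    rw [hP_def, hpm.natDegree_map, hpdeg]
  have hPne : P ≠ 0 := hPm.ne_zero
  -- roots
  have hmemroots : ∀ i : Fin n, r i ∈ P.roots := by
    intro i
    rw [Polynomial.mem_roots hPne]
    exact hrroot i
  have hnodup : (Finset.univ.val.map r).Nodup :=
    Multiset.Nodup.map hrinj Finset.univ.2
  have hle : (Finset.univ.val.map r) ≤ P.roots := by
    rw [Multiset.le_iff_subset hnodup]
    intro x hx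
    obtain ⟨i, _, rfl⟩ := Multiset.mem_map.mp hx
    exact hmemroots i
  have hcard1 : Multiset.card (Finset.univ.val.map r) = n := by
    simp
  have hcard2 : Multiset.card P.roots ≤ n := by
    rw [← hPdeg]
    exact Polynomial.card_roots' P
  have hroots_eq : P.roots = Finset.univ.val.map r := by
    symm
    apply Multiset.eq_of_le_of_card_le hle
    rw [hcard1]
    exact hcard2
  have hsplits : Polynomial.Splits P := by
    rw [Polynomial.splits_iff_card_roots, hroots_eq, hcard1, hPdeg]
  have hfact := hsplits.eq_prod_roots_of_monic hPm
  refine ⟨r, hrinj, hrpos, ?_⟩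
  show P = ∏ i, (X - C (r i))
  rw [hfact, hroots_eq, Multiset.map_map]
  rfl
end

section
/- Let S be a real d×d matrix and Φ(x) = Σ_{n≥0} xⁿ/(n+1)!. Then Φ(tS) is invertible for all real t if and only if S has no nonzero purely imaginary eigenvalue. -/
open scoped Matrix

/-- The matrix power series `Φ(S) = Σ_{n ≥ 0} Sⁿ/(n+1)!`. -/
noncomputable def PhiMat {d : ℕ} (S : Matrix (Fin d) (Fin d) ℝ) : Matrix (Fin d) (Fin d) ℝ :=
  ∑' k : ℕ, (((k + 1).factorial : ℝ))⁻¹ • S ^ k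

noncomputable def phiC (z : ℂ) : ℂ := ∑' k : ℕ, (((k + 1).factorial : ℂ))⁻¹ * z ^ k

lemma summable_phiC (z : ℂ) : Summable fun k : ℕ => (((k + 1).factorial : ℂ))⁻¹ * z ^ k := by
  apply Summable.of_norm
  apply Summable.of_nonneg_of_le (fun k => norm_nonneg _) (fun k => ?_)
    (Real.summable_pow_div_factorial ‖z‖)
  rw [norm_mul, norm_pow, norm_inv, Complex.norm_natCast, div_eq_mul_inv, mul_comm]
  have h1 : ((k + 1).factorial : ℝ)⁻¹ ≤ ((k.factorial : ℝ))⁻¹ := by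
    apply inv_anti₀
    · exact_mod_cast k.factorial_pos
    · exact_mod_cast Nat.factorial_le (Nat.le_succ k)
  exact mul_le_mul_of_nonneg_left h1 (pow_nonneg (norm_nonneg z) k)

lemma mul_phiC (z : ℂ) : z * phiC z = Complex.exp z - 1 := by
  have hs := NormedSpace.expSeries_summable' (𝕂 := ℂ) z
  have h : Complex.exp z = ∑' n : ℕ, ((n.factorial : ℂ))⁻¹ • z ^ n := by
    rw [Complex.exp_eq_exp_ℂ, NormedSpace.exp_eq_tsum ℂ]
  rw [Summable.tsum_eq_zero_add hs] at h
  simp only [Nat.factorial_zero, Nat.cast_one, inv_one, pow_zero, one_smul, smul_eq_mul] at h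
  have key : ∑' k : ℕ, z * ((((k + 1).factorial : ℂ))⁻¹ * z ^ k)
      = ∑' k : ℕ, (((k + 1).factorial : ℂ))⁻¹ * z ^ (k + 1) :=
    tsum_congr fun k => by ring
  rw [phiC, ← tsum_mul_left, key, h]
  ring

lemma phiC_zero : phiC 0 = 1 := by
  rw [phiC, tsum_eq_single 0 (fun k hk => by simp [zero_pow hk])]
  simp

lemma phiC_eq_zero_iff {z : ℂ} :
    phiC z = 0 ↔ ∃ n : ℤ, n ≠ 0 ∧ z = n * (2 * Real.pi * Complex.I) := by
  constructor
  · intro h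
    have hz : z ≠ 0 := fun h0 => by simp [h0, phiC_zero] at h
    have h2 := mul_phiC z
    rw [h, mul_zero] at h2
    have h3 : Complex.exp z = 1 := by linear_combination -h2
    obtain ⟨n, hn⟩ := Complex.exp_eq_one_iff.mp h3
    refine ⟨n, ?_, hn⟩
    rintro rfl; simp at hn; exact hz hn
  · rintro ⟨n, hn, rfl⟩
    have h := mul_phiC ((n : ℂ) * (2 * Real.pi * Complex.I))
    rw [Complex.exp_eq_one_iff.mpr ⟨n, rfl⟩, sub_self] at h
    have hz : (n : ℂ) * (2 * Real.pi * Complex.I) ≠ 0 := by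
      simp [Complex.I_ne_zero, Real.pi_ne_zero, hn]
    exact (mul_eq_zero.mp h).resolve_left hz

section MatrixLemmas

attribute [local instance] Matrix.linftyOpNormedRing Matrix.linftyOpNormedAlgebra

variable {d : ℕ}

lemma norm_one_le_mat (𝕜 : Type*) [RCLike 𝕜] : ‖(1 : Matrix (Fin d) (Fin d) 𝕜)‖ ≤ 1 := by
  rw [← Matrix.diagonal_one, Matrix.linfty_opNorm_diagonal]
  rw [pi_norm_le_iff_of_nonneg zero_le_one]
  intro i; simp

lemma summable_matPhi {𝕜 : Type*} [RCLike 𝕜] (A : Matrix (Fin d) (Fin d) 𝕜) :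
    Summable fun k : ℕ => (((k + 1).factorial : 𝕜))⁻¹ • A ^ k := by
  apply Summable.of_norm
  apply Summable.of_nonneg_of_le (fun k => norm_nonneg _) (fun k => ?_)
    (Real.summable_pow_div_factorial ‖A‖)
  rw [norm_smul, norm_inv, RCLike.norm_natCast, div_eq_mul_inv, mul_comm]
  have h2 : ‖A ^ k‖ ≤ ‖A‖ ^ k := by
    induction k with
    | zero => rw [pow_zero, pow_zero]; exact norm_one_le_mat 𝕜
    | succ n ih =>
        rw [pow_succ, pow_succ]
        exact (norm_mul_le _ _).trans (mul_le_mul_of_nonneg_right ih (norm_nonneg A))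
  have h1 : ((k + 1).factorial : ℝ)⁻¹ ≤ ((k.factorial : ℝ))⁻¹ := by
    apply inv_anti₀
    · exact_mod_cast k.factorial_pos
    · exact_mod_cast Nat.factorial_le (Nat.le_succ k)
  calc ‖A ^ k‖ * ((k + 1).factorial : ℝ)⁻¹ ≤ ‖A‖ ^ k * (k.factorial : ℝ)⁻¹ :=
        mul_le_mul h2 h1 (inv_nonneg.mpr (by positivity)) (pow_nonneg (norm_nonneg A) k)
    _ = ‖A‖ ^ k * (k.factorial : ℝ)⁻¹ := rfl

/-- `Φ(A)` of a complex matrix. -/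
noncomputable def PhiMatC (A : Matrix (Fin d) (Fin d) ℂ) : Matrix (Fin d) (Fin d) ℂ :=
  ∑' k : ℕ, (((k + 1).factorial : ℂ))⁻¹ • A ^ k

/-- mulVec by a fixed vector, as a continuous linear map in the matrix. -/
noncomputable def mulVecCLM (v : Fin d → ℂ) :
    Matrix (Fin d) (Fin d) ℂ →L[ℂ] (Fin d → ℂ) :=
  LinearMap.toContinuousLinearMap
    { toFun := fun B => B *ᵥ v
      map_add' := fun B C => Matrix.add_mulVec B C v
      map_smul' := fun c B => Matrix.smul_mulVec c B v }

lemma pow_mulVec_eigen (A : Matrix (Fin d) (Fin d) ℂ) {v : Fin d → ℂ} {μ : ℂ}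
    (hv : A *ᵥ v = μ • v) (k : ℕ) : A ^ k *ᵥ v = μ ^ k • v := by
  induction k with
  | zero => simp [Matrix.one_mulVec]
  | succ n ih =>
      rw [pow_succ, ← Matrix.mulVec_mulVec, hv, Matrix.mulVec_smul, ih, smul_smul, pow_succ]
      ring_nf

lemma PhiMatC_mulVec_eigen (A : Matrix (Fin d) (Fin d) ℂ) {v : Fin d → ℂ} {μ : ℂ}
    (hv : A *ᵥ v = μ • v) : PhiMatC A *ᵥ v = phiC μ • v := by
  have h1 : PhiMatC A *ᵥ v = mulVecCLM v (PhiMatC A) := rfl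
  rw [h1, PhiMatC, (mulVecCLM v).map_tsum (summable_matPhi A)]
  have h2 : ∀ k : ℕ, mulVecCLM v ((((k + 1).factorial : ℂ))⁻¹ • A ^ k)
      = ((((k + 1).factorial : ℂ))⁻¹ * μ ^ k) • v := by
    intro k
    rw [map_smul]
    show (((k + 1).factorial : ℂ))⁻¹ • (A ^ k *ᵥ v) = _
    rw [pow_mulVec_eigen A hv k, smul_smul]
  rw [tsum_congr h2, (summable_phiC μ).tsum_smul_const]
  rfl

lemma PhiMatC_comm (A : Matrix (Fin d) (Fin d) ℂ) : A * PhiMatC A = PhiMatC A * A := by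
  have hL : A * PhiMatC A =
      LinearMap.toContinuousLinearMap (LinearMap.mulLeft ℂ A) (PhiMatC A) := rfl
  have hR : PhiMatC A * A =
      LinearMap.toContinuousLinearMap (LinearMap.mulRight ℂ A) (PhiMatC A) := rfl
  rw [hL, hR, PhiMatC, ContinuousLinearMap.map_tsum _ (summable_matPhi A),
    ContinuousLinearMap.map_tsum _ (summable_matPhi A)]
  apply tsum_congr
  intro k
  show A * ((((k + 1).factorial : ℂ))⁻¹ • A ^ k) = (((k + 1).factorial : ℂ))⁻¹ • A ^ k * A
  rw [mul_smul_comm, smul_mul_assoc, ← pow_succ, ← pow_succ']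

/-- Complexification commutes with Φ. -/
lemma PhiMat_map (B : Matrix (Fin d) (Fin d) ℝ) :
    (PhiMat B).map (algebraMap ℝ ℂ) = PhiMatC (B.map (algebraMap ℝ ℂ)) := by
  let L : Matrix (Fin d) (Fin d) ℝ →ₗ[ℝ] Matrix (Fin d) (Fin d) ℂ :=
    { toFun := fun M => M.map (algebraMap ℝ ℂ)
      map_add' := fun M N => by ext i j; simp [Matrix.map_apply]
      map_smul' := fun c M => by ext i j; simp [Matrix.map_apply, Complex.real_smul] }
  have hcont : (PhiMat B).map (algebraMap ℝ ℂ) =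
      LinearMap.toContinuousLinearMap L (PhiMat B) := rfl
  rw [hcont, PhiMat, ContinuousLinearMap.map_tsum _ (summable_matPhi B), PhiMatC]
  apply tsum_congr
  intro k
  show ((((k + 1).factorial : ℝ))⁻¹ • B ^ k).map (algebraMap ℝ ℂ)
      = (((k + 1).factorial : ℂ))⁻¹ • (B.map (algebraMap ℝ ℂ)) ^ k
  have hpow : (B ^ k).map (algebraMap ℝ ℂ) = (B.map (algebraMap ℝ ℂ)) ^ k := by
    simpa [RingHom.mapMatrix_apply] using map_pow ((algebraMap ℝ ℂ).mapMatrix) B k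
  have hsmul : ∀ (c : ℝ) (M : Matrix (Fin d) (Fin d) ℝ),
      (c • M).map (algebraMap ℝ ℂ) = (c : ℂ) • M.map (algebraMap ℝ ℂ) := by
    intro c M; ext i j; simp [Matrix.map_apply]
  rw [hsmul, hpow]
  congr 1
  push_cast
  ring

end MatrixLemmas

lemma mem_spectrum_iff_exists {d : ℕ} (M : Matrix (Fin d) (Fin d) ℂ) (μ : ℂ) :
    μ ∈ spectrum ℂ M ↔ ∃ v : Fin d → ℂ, v ≠ 0 ∧ M *ᵥ v = μ • v := by
  rw [spectrum.mem_iff, Matrix.isUnit_iff_isUnit_det, isUnit_iff_ne_zero, not_not,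
    ← Matrix.exists_mulVec_eq_zero_iff]
  constructor
  · rintro ⟨v, hv, h⟩
    refine ⟨v, hv, ?_⟩
    have : (μ • (1 : Matrix (Fin d) (Fin d) ℂ) - M) *ᵥ v = 0 := by
      rwa [Algebra.algebraMap_eq_smul_one] at h
    rw [Matrix.sub_mulVec, Matrix.smul_mulVec, Matrix.one_mulVec, sub_eq_zero] at this
    exact this.symm
  · rintro ⟨v, hv, h⟩
    refine ⟨v, hv, ?_⟩
    rw [Algebra.algebraMap_eq_smul_one, Matrix.sub_mulVec, Matrix.smul_mulVec,
      Matrix.one_mulVec, h, sub_self]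

lemma PhiMat_zero {d : ℕ} : PhiMat (0 : Matrix (Fin d) (Fin d) ℝ) = 1 := by
  rw [PhiMat, tsum_eq_single 0 (fun k hk => by simp [zero_pow hk])]
  simp

lemma smul_map {d : ℕ} (t : ℝ) (S : Matrix (Fin d) (Fin d) ℝ) :
    (t • S).map (algebraMap ℝ ℂ) = (t : ℂ) • S.map (algebraMap ℝ ℂ) := by
  ext i j; simp [Matrix.map_apply]

set_option maxHeartbeats 1000000 in
/-- `Φ(tS)` is invertible for all real `t` if and only if `S` has no nonzero purely
imaginary complex eigenvalue. -/
theorem stmt13 (d : ℕ) (S : Matrix (Fin d) (Fin d) ℝ) :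
    (∀ t : ℝ, IsUnit (PhiMat (t • S))) ↔
      ∀ a : ℝ, a ≠ 0 → (a : ℂ) * Complex.I ∉ spectrum ℂ (S.map (algebraMap ℝ ℂ)) := by
  set Sc := S.map (algebraMap ℝ ℂ) with hSc
  constructor
  · intro h a ha hmem
    obtain ⟨v, hv, hev⟩ := (mem_spectrum_iff_exists Sc _).mp hmem
    set t : ℝ := 2 * Real.pi / a with ht
    have hA : ((t • S).map (algebraMap ℝ ℂ)) *ᵥ v = (2 * Real.pi * Complex.I) • v := by
      rw [smul_map, ← hSc, Matrix.smul_mulVec, hev, smul_smul]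
      congr 1
      have haC : (a : ℂ) ≠ 0 := by exact_mod_cast ha
      rw [ht]
      push_cast
      field_simp
    have hphi : phiC (2 * Real.pi * Complex.I) = 0 :=
      phiC_eq_zero_iff.mpr ⟨1, one_ne_zero, by push_cast; ring⟩
    have hzero : PhiMatC ((t • S).map (algebraMap ℝ ℂ)) *ᵥ v = 0 := by
      rw [PhiMatC_mulVec_eigen _ hA, hphi, zero_smul]
    have hdetC : (PhiMatC ((t • S).map (algebraMap ℝ ℂ))).det = 0 :=
      Matrix.exists_mulVec_eq_zero_iff.mp ⟨v, hv, hzero⟩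
    have hu := h t
    rw [Matrix.isUnit_iff_isUnit_det, isUnit_iff_ne_zero] at hu
    apply hu
    have h5 := (algebraMap ℝ ℂ).map_det (PhiMat (t • S))
    have h6 : ((algebraMap ℝ ℂ).mapMatrix (PhiMat (t • S))).det = 0 := by
      rw [RingHom.mapMatrix_apply, PhiMat_map]; exact hdetC
    rw [h6] at h5
    have h7 : ((PhiMat (t • S)).det : ℂ) = 0 := h5
    exact_mod_cast h7
  · intro h t
    by_contra hnu
    have ht : t ≠ 0 := by
      rintro rfl
      exact hnu (by rw [zero_smul, PhiMat_zero]; exact isUnit_one)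
    have hdet : (PhiMat (t • S)).det = 0 := by
      rw [Matrix.isUnit_iff_isUnit_det, isUnit_iff_ne_zero, not_not] at hnu
      exact hnu
    set A := (t • S).map (algebraMap ℝ ℂ) with hA
    have hdetC : (PhiMatC A).det = 0 := by
      rw [hA, ← PhiMat_map, ← RingHom.mapMatrix_apply, ← RingHom.map_det, hdet, map_zero]
    obtain ⟨v, hv, hker⟩ := Matrix.exists_mulVec_eq_zero_iff.mpr hdetC
    set K := LinearMap.ker (Matrix.mulVecLin (PhiMatC A)) with hK
    have hvK : v ∈ K :=
      LinearMap.mem_ker.mpr (by rw [Matrix.mulVecLin_apply]; exact hker)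
    have : Nontrivial K :=
      ⟨⟨⟨v, hvK⟩, 0, fun hcon => hv (congrArg Subtype.val hcon)⟩⟩
    have hinv : ∀ x ∈ K, Matrix.mulVecLin A x ∈ K := by
      intro x hx
      simp only [hK, LinearMap.mem_ker, Matrix.mulVecLin_apply] at hx ⊢
      rw [Matrix.mulVec_mulVec, ← PhiMatC_comm, ← Matrix.mulVec_mulVec, hx, Matrix.mulVec_zero]
    set f : K →ₗ[ℂ] K := (Matrix.mulVecLin A).restrict hinv with hf
    obtain ⟨μ, hμ⟩ := Module.End.exists_eigenvalue f
    obtain ⟨w, hw⟩ := hμ.exists_hasEigenvector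
    have hw1 : A *ᵥ (w : Fin d → ℂ) = μ • (w : Fin d → ℂ) := by
      have h2 := congrArg (Subtype.val) hw.apply_eq_smul
      rw [hf] at h2
      rw [← Matrix.mulVecLin_apply, ← LinearMap.restrict_coe_apply _ hinv w]
      exact h2
    have hwne : (w : Fin d → ℂ) ≠ 0 := by
      intro hcon
      exact hw.right (Subtype.ext hcon)
    have hker2 : PhiMatC A *ᵥ (w : Fin d → ℂ) = 0 := by
      have h3 : Matrix.mulVecLin (PhiMatC A) (w : Fin d → ℂ) = 0 := LinearMap.mem_ker.mp w.2
      rwa [Matrix.mulVecLin_apply] at h3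
    have hphi0 : phiC μ = 0 := by
      have := PhiMatC_mulVec_eigen A hw1
      rw [hker2] at this
      rcases smul_eq_zero.mp this.symm with h' | h'
      · exact h'
      · exact absurd h' hwne
    obtain ⟨n, hn, hμval⟩ := phiC_eq_zero_iff.mp hphi0
    set a : ℝ := 2 * Real.pi * n / t with ha
    have haz : a ≠ 0 := by
      rw [ha]
      apply div_ne_zero _ ht
      have : (n : ℝ) ≠ 0 := Int.cast_ne_zero.mpr hn
      positivity
    apply h a haz
    rw [mem_spectrum_iff_exists]
    refine ⟨w, hwne, ?_⟩
    have hA2 : A *ᵥ (w : Fin d → ℂ) = (t : ℂ) • (Sc *ᵥ (w : Fin d → ℂ)) := by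
      rw [hA, smul_map, ← hSc, Matrix.smul_mulVec]
    have htC : (t : ℂ) ≠ 0 := by exact_mod_cast ht
    have : Sc *ᵥ (w : Fin d → ℂ) = ((t : ℂ)⁻¹ * μ) • (w : Fin d → ℂ) := by
      rw [mul_smul, ← hw1, hA2, smul_smul, inv_mul_cancel₀ htC, one_smul]
    rw [this]
    congr 1
    rw [hμval, ha]
    push_cast
    field_simp
end
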